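/- For every even natural number N > 6, the restricted correlation sum over non-coprime decompositions satisfies the upper bound ∑_{1 ≤ n ≤ N−1, gcd(n, N−n) > 1} Υ(n) · Υ(N − n) ≤ (log N / log 2)² · ∑_{p prime, p ∣ N} ∑_{1 ≤ n ≤ N/p − 1} Λ₀(n) · Λ₀(N/p − n). -/

import Mathlib

open scoped Classical
open Finset Real

/-- The master function `Υ`: `Υ(n) = log p` if `n = p²` for a prime `p` (note then
`p = √n`), `Υ(n) = log(p₁p₂)` if `n = p₁p₂` for distinct primes `p₁, p₂`, and
`Υ(n) = 0` otherwise. -/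
noncomputable def Upsilon (n : ℕ) : ℝ :=
  if ∃ p : ℕ, p.Prime ∧ n = p ^ 2 then Real.log (Nat.sqrt n)
  else if ∃ p₁ p₂ : ℕ, p₁.Prime ∧ p₂.Prime ∧ p₁ ≠ p₂ ∧ n = p₁ * p₂ then Real.log n
  else 0

/-- The truncated von Mangoldt function: `Λ₀(n) = log n` if `n` is prime, else `0`. -/
noncomputable def Lambda0 (n : ℕ) : ℝ := if n.Prime then Real.log n else 0

lemma Lambda0_nonneg (n : ℕ) : 0 ≤ Lambda0 n := by
  unfold Lambda0
  split_ifs with h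
  · exact Real.log_nonneg (by exact_mod_cast h.one_lt.le)
  · exact le_refl 0

lemma Lambda0_prime {n : ℕ} (h : n.Prime) : Lambda0 n = Real.log n := if_pos h

lemma Upsilon_nonneg (n : ℕ) : 0 ≤ Upsilon n := by
  unfold Upsilon
  split_ifs with h1 h2
  · obtain ⟨p, hp, rfl⟩ := h1
    have hs : Nat.sqrt (p ^ 2) = p := by rw [sq]; exact Nat.sqrt_eq p
    rw [hs]
    exact Real.log_nonneg (by exact_mod_cast hp.one_lt.le)
  · obtain ⟨p, q, hp, hq, _, rfl⟩ := h2
    refine Real.log_nonneg ?_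
    have : 1 ≤ p * q := Nat.one_le_iff_ne_zero.mpr (mul_ne_zero hp.pos.ne' hq.pos.ne')
    exact_mod_cast this
  · exact le_refl 0

lemma Upsilon_le_log {n M : ℕ} (hM : 1 ≤ M) (h : n ≤ M) : Upsilon n ≤ Real.log M := by
  unfold Upsilon
  split_ifs with h1 h2
  · obtain ⟨p, hp, rfl⟩ := h1
    have hs : Nat.sqrt (p ^ 2) = p := by rw [sq]; exact Nat.sqrt_eq p
    rw [hs]
    have hpM : p ≤ M := le_trans (Nat.le_self_pow two_ne_zero p) h
    exact Real.log_le_log (by exact_mod_cast hp.pos) (by exact_mod_cast hpM)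
  · obtain ⟨p, q, hp, hq, _, rfl⟩ := h2
    have hpos : 0 < p * q := Nat.mul_pos hp.pos hq.pos
    exact Real.log_le_log (by exact_mod_cast hpos) (by exact_mod_cast h)
  · exact Real.log_nonneg (by exact_mod_cast hM)

lemma prime_div_of_upsilon_ne_zero {n p : ℕ} (hp : p.Prime) (hpn : p ∣ n)
    (h : Upsilon n ≠ 0) : (n / p).Prime := by
  unfold Upsilon at h
  split_ifs at h with h1 h2
  · obtain ⟨q, hq, rfl⟩ := h1
    have hpq : p ∣ q := hp.dvd_of_dvd_pow hpn
    have : p = q := (Nat.prime_dvd_prime_iff_eq hp hq).mp hpq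
    subst this
    have : p ^ 2 / p = p := by rw [sq]; exact Nat.mul_div_cancel_left p hp.pos
    rw [this]; exact hp
  · obtain ⟨q₁, q₂, hq₁, hq₂, _, rfl⟩ := h2
    rcases (Nat.Prime.dvd_mul hp).mp hpn with hd | hd
    · have : p = q₁ := (Nat.prime_dvd_prime_iff_eq hp hq₁).mp hd
      subst this
      rw [Nat.mul_div_cancel_left q₂ hp.pos]; exact hq₂
    · have : p = q₂ := (Nat.prime_dvd_prime_iff_eq hp hq₂).mp hd
      subst this
      rw [Nat.mul_div_cancel q₁ hp.pos]; exact hq₁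
  · exact absurd rfl h

/-- For every even `N > 6`,
`∑_{1 ≤ n ≤ N−1, gcd(n, N−n) > 1} Υ(n)·Υ(N−n)
  ≤ (log N / log 2)² · ∑_{p ∣ N prime} ∑_{1 ≤ n ≤ N/p−1} Λ₀(n)·Λ₀(N/p−n)`. -/
theorem upsilon_noncoprime_correlation_upper_bound (N : ℕ) (hN : Even N)
    (hN6 : 6 < N) :
    ∑ n ∈ (Finset.Icc 1 (N - 1)).filter (fun n => 1 < Nat.gcd n (N - n)),
        Upsilon n * Upsilon (N - n) ≤
      (Real.log N / Real.log 2) ^ 2 *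
        ∑ p ∈ N.primeFactors, ∑ n ∈ Finset.Icc 1 (N / p - 1),
          Lambda0 n * Lambda0 (N / p - n) := by
  have hN0 : N ≠ 0 := by omega
  have hlog2 : (0:ℝ) < Real.log 2 := Real.log_pos (by norm_num)
  have hlogN : (0:ℝ) ≤ Real.log N :=
    Real.log_nonneg (by exact_mod_cast (by omega : 1 ≤ N))
  set C : ℝ := (Real.log N / Real.log 2) ^ 2 with hC
  have hC0 : 0 ≤ C := sq_nonneg _
  set S := (Finset.Icc 1 (N - 1)).filter (fun n => 1 < Nat.gcd n (N - n)) with hS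
  set T := N.primeFactors.sigma (fun p => Finset.Icc 1 (N / p - 1)) with hT
  set g : (Σ _ : ℕ, ℕ) → ℝ := fun m => Lambda0 m.2 * Lambda0 (N / m.1 - m.2) with hg
  set f : ℕ → (Σ _ : ℕ, ℕ) :=
    fun n => ⟨(Nat.gcd n (N - n)).minFac, n / (Nat.gcd n (N - n)).minFac⟩ with hf
  -- basic facts for n ∈ S
  have hfacts : ∀ n ∈ S,
      ∃ p a b : ℕ, p.Prime ∧ p ∣ N ∧ n = p * a ∧ N - n = p * b ∧ 1 ≤ a ∧ 1 ≤ b ∧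
        N / p = a + b ∧ f n = ⟨p, a⟩ := by
    intro n hn
    rw [hS, Finset.mem_filter, Finset.mem_Icc] at hn
    obtain ⟨⟨h1, h2⟩, hgcd⟩ := hn
    set p := (Nat.gcd n (N - n)).minFac with hpdef
    have hp : p.Prime := Nat.minFac_prime (by omega)
    have hpn : p ∣ n := dvd_trans (Nat.minFac_dvd _) (Nat.gcd_dvd_left _ _)
    have hpm : p ∣ N - n := dvd_trans (Nat.minFac_dvd _) (Nat.gcd_dvd_right _ _)
    obtain ⟨a, ha⟩ := hpn
    obtain ⟨b, hb⟩ := hpm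
    have ha1 : 1 ≤ a := by
      rcases Nat.eq_zero_or_pos a with h | h
      · subst h; simp at ha; omega
      · exact h
    have hb1 : 1 ≤ b := by
      rcases Nat.eq_zero_or_pos b with h | h
      · subst h; simp at hb; omega
      · exact h
    have hNab : N = p * (a + b) := by rw [mul_add, ← ha, ← hb]; omega
    have hpN : p ∣ N := ⟨a + b, hNab⟩
    have hdivN : N / p = a + b := by rw [hNab]; exact Nat.mul_div_cancel_left _ hp.pos
    have hdivn : n / p = a := by rw [ha]; exact Nat.mul_div_cancel_left a hp.pos
    exact ⟨p, a, b, hp, hpN, ha, hb, ha1, hb1, hdivN, by rw [hf]; simp only; rw [← hpdef, hdivn]⟩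
  have hmem : ∀ n ∈ S, f n ∈ T := by
    intro n hn
    obtain ⟨p, a, b, hp, hpN, ha, hb, ha1, hb1, hdivN, hfn⟩ := hfacts n hn
    rw [hfn, hT, Finset.mem_sigma]
    constructor
    · exact Nat.mem_primeFactors.mpr ⟨hp, hpN, hN0⟩
    · rw [Finset.mem_Icc]
      refine ⟨ha1, ?_⟩
      show a ≤ N / p - 1
      omega
  have hinj : ∀ n₁ ∈ S, ∀ n₂ ∈ S, f n₁ = f n₂ → n₁ = n₂ := by
    intro n₁ h₁ n₂ h₂ heq
    obtain ⟨p₁, a₁, b₁, hp₁, _, ha₁, _, _, _, _, hfn₁⟩ := hfacts n₁ h₁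
    obtain ⟨p₂, a₂, b₂, hp₂, _, ha₂, _, _, _, _, hfn₂⟩ := hfacts n₂ h₂
    rw [hfn₁, hfn₂] at heq
    obtain ⟨hpe, hae⟩ := Sigma.mk.inj_iff.mp heq
    rw [ha₁, ha₂, hpe, eq_of_heq hae]
  have hbound : ∀ n ∈ S, Upsilon n * Upsilon (N - n) ≤ C * g (f n) := by
    intro n hn
    by_cases h0 : Upsilon n * Upsilon (N - n) = 0
    · rw [h0]
      exact mul_nonneg hC0 (mul_nonneg (Lambda0_nonneg _) (Lambda0_nonneg _))
    · have hUn : Upsilon n ≠ 0 := fun h => h0 (by rw [h, zero_mul])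
      have hUm : Upsilon (N - n) ≠ 0 := fun h => h0 (by rw [h, mul_zero])
      obtain ⟨p, a, b, hp, hpN, ha, hb, ha1, hb1, hdivN, hfn⟩ := hfacts n hn
      have hnS := hn
      rw [hS, Finset.mem_filter, Finset.mem_Icc] at hnS
      obtain ⟨⟨h1, h2⟩, _⟩ := hnS
      have hpa : (n / p).Prime := prime_div_of_upsilon_ne_zero hp ⟨a, ha⟩ hUn
      have hpb : ((N - n) / p).Prime := prime_div_of_upsilon_ne_zero hp ⟨b, hb⟩ hUm
      have hda : n / p = a := by rw [ha]; exact Nat.mul_div_cancel_left a hp.pos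
      have hdb : (N - n) / p = b := by rw [hb]; exact Nat.mul_div_cancel_left b hp.pos
      rw [hda] at hpa
      rw [hdb] at hpb
      have hgfn : g (f n) = Real.log a * Real.log b := by
        rw [hfn, hg]
        simp only
        rw [hdivN]
        have : a + b - a = b := by omega
        rw [this, Lambda0_prime hpa, Lambda0_prime hpb]
      rw [hgfn]
      have hUnle : Upsilon n ≤ Real.log N := Upsilon_le_log (by omega) (by omega)
      have hUmle : Upsilon (N - n) ≤ Real.log N := Upsilon_le_log (by omega) (by omega)
      have step1 : Upsilon n * Upsilon (N - n) ≤ Real.log N * Real.log N :=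
        mul_le_mul hUnle hUmle (Upsilon_nonneg _) hlogN
      have hla : Real.log 2 ≤ Real.log a :=
        Real.log_le_log (by norm_num) (by exact_mod_cast hpa.two_le)
      have hlb : Real.log 2 ≤ Real.log b :=
        Real.log_le_log (by norm_num) (by exact_mod_cast hpb.two_le)
      have step2 : C * (Real.log 2 * Real.log 2) ≤ C * (Real.log a * Real.log b) :=
        mul_le_mul_of_nonneg_left
          (mul_le_mul hla hlb hlog2.le (le_trans hlog2.le hla)) hC0
      have key : Real.log N * Real.log N = C * (Real.log 2 * Real.log 2) := by
        rw [hC]; field_simp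
      calc Upsilon n * Upsilon (N - n) ≤ Real.log N * Real.log N := step1
        _ = C * (Real.log 2 * Real.log 2) := key
        _ ≤ C * (Real.log a * Real.log b) := step2
  calc ∑ n ∈ S, Upsilon n * Upsilon (N - n)
      ≤ ∑ n ∈ S, C * g (f n) := Finset.sum_le_sum hbound
    _ = C * ∑ n ∈ S, g (f n) := by rw [Finset.mul_sum]
    _ = C * ∑ m ∈ S.image f, g m := by rw [Finset.sum_image hinj]
    _ ≤ C * ∑ m ∈ T, g m := by
        refine mul_le_mul_of_nonneg_left ?_ hC0
        refine Finset.sum_le_sum_of_subset_of_nonneg ?_ ?_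
        · intro m hm
          obtain ⟨n, hn, rfl⟩ := Finset.mem_image.mp hm
          exact hmem n hn
        · intro m _ _
          exact mul_nonneg (Lambda0_nonneg _) (Lambda0_nonneg _)
    _ = C * ∑ p ∈ N.primeFactors, ∑ n ∈ Finset.Icc 1 (N / p - 1),
          Lambda0 n * Lambda0 (N / p - n) := by
        rw [hT, Finset.sum_sigma]
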